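/- arXiv:1910.07465 — 6 statements merged into one kernel-verified Lean document; each statement's English description precedes it below -/
import Mathlib

section
/- Vanishing-perturbation corollary: Under the hypotheses of the perturbation theorem with ψ₁ ≡ 0 and ψ₂ ≡ 0 (i.e., ‖g₁(w_p,v_p,z)‖ ≤ γ₁(z)‖w_p‖ and ‖g₂(w_p,v_p,z)‖ ≤ γ₂(z)‖w_p‖, and c₄∫_{z₀}^{z} γ₁ + c₅∫_{z₀}^{z} γ₂ ≤ κ(z−z₀) + η with 0 ≤ κ < c₁c₃/c₂, η ≥ 0), the origin w_p = 0 of the perturbed system dw_p/dz = φ₁(w_p,v_p,z) + g₁(w_p,v_p,z), dv_p/dz = φ₂(w_p,v_p,z) + g₂(w_p,v_p,z) is partially exponentially stable uniformly in v_p; specifically, for any initial time z₀ ∈ ℝ and any initial state with ‖w_p(z₀)‖ < (δ/k₂)√(c₁/c₂), the solution satisfies ‖w_p(z)‖ ≤ k₂√(c₂/c₁)‖w_p(z₀)‖e^{−k₁(z−z₀)} for all z ≥ z₀, where k₁ = c₃/(2c₂) − κ/(2c₁) and k₂ = exp(η/(2c₁)). -/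
open Real

set_option maxHeartbeats 2000000 in
/-- Vanishing-perturbation corollary: under the hypotheses of the perturbation
theorem with ψ₁ ≡ 0 and ψ₂ ≡ 0 (i.e. ‖gᵢ‖ ≤ γᵢ(z)‖w_p‖), the origin w_p = 0 of the
perturbed system is partially exponentially stable uniformly in v_p: every solution
with ‖w_p(z₀)‖ < (δ/k₂)√(c₁/c₂) satisfies
‖w_p(z)‖ ≤ k₂√(c₂/c₁)‖w_p(z₀)‖e^{−k₁(z−z₀)} for all z ≥ z₀, where
k₁ = c₃/(2c₂) − κ/(2c₁) and k₂ = exp(η/(2c₁)). -/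
theorem stmt_4 {n m : ℕ} (δ c₁ c₂ c₃ c₄ c₅ κ η k₁ k₂ : ℝ)
    (hδ : 0 < δ) (hc₁ : 0 < c₁) (hc₂ : 0 < c₂) (hc₃ : 0 < c₃) (hc₄ : 0 < c₄)
    (hc₅ : 0 < c₅) (hκ0 : 0 ≤ κ) (hκ : κ < c₁ * c₃ / c₂) (hη : 0 ≤ η)
    (hk₁ : k₁ = c₃ / (2 * c₂) - κ / (2 * c₁))
    (hk₂ : k₂ = Real.exp (η / (2 * c₁)))
    (φ₁ : EuclideanSpace ℝ (Fin n) → EuclideanSpace ℝ (Fin m) → ℝ → EuclideanSpace ℝ (Fin n))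
    (φ₂ : EuclideanSpace ℝ (Fin n) → EuclideanSpace ℝ (Fin m) → ℝ → EuclideanSpace ℝ (Fin m))
    (g₁ : EuclideanSpace ℝ (Fin n) → EuclideanSpace ℝ (Fin m) → ℝ → EuclideanSpace ℝ (Fin n))
    (g₂ : EuclideanSpace ℝ (Fin n) → EuclideanSpace ℝ (Fin m) → ℝ → EuclideanSpace ℝ (Fin m))
    (hφ₁ : ContDiff ℝ 1
      (fun p : EuclideanSpace ℝ (Fin n) × EuclideanSpace ℝ (Fin m) × ℝ => φ₁ p.1 p.2.1 p.2.2))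
    (hφ₂ : ContDiff ℝ 1
      (fun p : EuclideanSpace ℝ (Fin n) × EuclideanSpace ℝ (Fin m) × ℝ => φ₂ p.1 p.2.1 p.2.2))
    (heq₁ : ∀ v z, φ₁ 0 v z = 0)
    (heq₂ : ∀ v z, φ₂ 0 v z = 0)
    -- the Lyapunov function of the nominal system
    (V : EuclideanSpace ℝ (Fin n) → EuclideanSpace ℝ (Fin m) → ℝ → ℝ)
    (hVdiff : ∀ (w : EuclideanSpace ℝ (Fin n)), ‖w‖ < δ →
      ∀ (v : EuclideanSpace ℝ (Fin m)) (z : ℝ),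
        DifferentiableAt ℝ
          (fun p : EuclideanSpace ℝ (Fin n) × EuclideanSpace ℝ (Fin m) × ℝ =>
            V p.1 p.2.1 p.2.2) (w, v, z))
    (hVlow : ∀ (w : EuclideanSpace ℝ (Fin n)), ‖w‖ < δ →
      ∀ (v : EuclideanSpace ℝ (Fin m)) (z : ℝ), c₁ * ‖w‖^2 ≤ V w v z)
    (hVup : ∀ (w : EuclideanSpace ℝ (Fin n)), ‖w‖ < δ →
      ∀ (v : EuclideanSpace ℝ (Fin m)) (z : ℝ), V w v z ≤ c₂ * ‖w‖^2)
    (hVdecay : ∀ (w : EuclideanSpace ℝ (Fin n)), ‖w‖ < δ →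
      ∀ (v : EuclideanSpace ℝ (Fin m)) (z : ℝ),
        deriv (fun z' => V w v z') z
            + fderiv ℝ (fun w' => V w' v z) w (φ₁ w v z)
            + fderiv ℝ (fun v' => V w v' z) v (φ₂ w v z) ≤ -c₃ * ‖w‖^2)
    (hVw : ∀ (w : EuclideanSpace ℝ (Fin n)), ‖w‖ < δ →
      ∀ (v : EuclideanSpace ℝ (Fin m)) (z : ℝ),
        ‖fderiv ℝ (fun w' => V w' v z) w‖ ≤ c₄ * ‖w‖)
    (hVv : ∀ (w : EuclideanSpace ℝ (Fin n)), ‖w‖ < δ →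
      ∀ (v : EuclideanSpace ℝ (Fin m)) (z : ℝ),
        ‖fderiv ℝ (fun v' => V w v' z) v‖ ≤ c₅ * ‖w‖)
    -- the perturbation bounds
    (γ₁ γ₂ : ℝ → ℝ)
    (hγ₁cont : Continuous γ₁) (hγ₂cont : Continuous γ₂)
    (hγ₁pos : ∀ z, 0 ≤ γ₁ z) (hγ₂pos : ∀ z, 0 ≤ γ₂ z)
    (hg₁ : ∀ w v z, ‖g₁ w v z‖ ≤ γ₁ z * ‖w‖)
    (hg₂ : ∀ w v z, ‖g₂ w v z‖ ≤ γ₂ z * ‖w‖) :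
    ∀ z₀ : ℝ,
      (∀ z ≥ z₀, c₄ * (∫ τ in z₀..z, γ₁ τ) + c₅ * (∫ τ in z₀..z, γ₂ τ)
          ≤ κ * (z - z₀) + η) →
      ∀ (wp : ℝ → EuclideanSpace ℝ (Fin n)) (vp : ℝ → EuclideanSpace ℝ (Fin m)),
        (∀ z ≥ z₀, HasDerivAt wp (φ₁ (wp z) (vp z) z + g₁ (wp z) (vp z) z) z) →
        (∀ z ≥ z₀, HasDerivAt vp (φ₂ (wp z) (vp z) z + g₂ (wp z) (vp z) z) z) →
        ‖wp z₀‖ < (δ / k₂) * Real.sqrt (c₁ / c₂) →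
        ∀ z ≥ z₀,
          ‖wp z‖ ≤ k₂ * Real.sqrt (c₂ / c₁) * ‖wp z₀‖ * Real.exp (-k₁ * (z - z₀)) := by
  intro z₀ hint wp vp hwp hvp hinit
  rcases Nat.eq_zero_or_pos n with rfl | hn
  · intro z hz
    have h0 : ∀ x : EuclideanSpace ℝ (Fin 0), ‖x‖ = 0 := by
      intro x
      simp [EuclideanSpace.norm_eq]
    simp [h0]
  have hc₁₂ : c₁ ≤ c₂ := by
    set w : EuclideanSpace ℝ (Fin n) := (δ/2) • EuclideanSpace.single (⟨0, hn⟩ : Fin n) (1:ℝ)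
      with hw
    have hwnorm : ‖w‖ = δ/2 := by
      rw [hw, norm_smul, EuclideanSpace.norm_single, norm_one, mul_one, Real.norm_eq_abs,
        abs_of_pos (half_pos hδ)]
    have hwδ : ‖w‖ < δ := by rw [hwnorm]; linarith
    have h1 := hVlow w hwδ 0 0
    have h2 := hVup w hwδ 0 0
    rw [hwnorm] at h1 h2
    nlinarith [pow_pos (half_pos hδ) 2]
  have hk₂pos : 0 < k₂ := by rw [hk₂]; exact Real.exp_pos _
  have hk₂ge1 : 1 ≤ k₂ := by rw [hk₂]; exact Real.one_le_exp (by positivity)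
  have hk₁pos : 0 < k₁ := by
    have h : κ * c₂ < c₁ * c₃ := by
      rw [lt_div_iff₀ hc₂] at hκ; linarith
    rw [hk₁, sub_pos, div_lt_div_iff₀ (by positivity) (by positivity)]
    nlinarith
  have hw0δ : ‖wp z₀‖ < δ := by
    have h1 : Real.sqrt (c₁ / c₂) ≤ 1 := Real.sqrt_le_one.mpr (by rw [div_le_one hc₂]; exact hc₁₂)
    have h2 : δ / k₂ ≤ δ := div_le_self hδ.le hk₂ge1
    calc ‖wp z₀‖ < (δ / k₂) * Real.sqrt (c₁ / c₂) := hinit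
      _ ≤ (δ / k₂) * 1 := mul_le_mul_of_nonneg_left h1 (by positivity)
      _ = δ / k₂ := mul_one _
      _ ≤ δ := h2
  have hacont : Continuous (fun τ => -(c₃/c₂) + (c₄ * γ₁ τ + c₅ * γ₂ τ)/c₁) :=
    continuous_const.add
      (((continuous_const.mul hγ₁cont).add (continuous_const.mul hγ₂cont)).div_const c₁)
  -- main estimate on intervals where the solution stays in the ball
  have key : ∀ z', z₀ ≤ z' → (∀ τ, z₀ ≤ τ → τ ≤ z' → ‖wp τ‖ < δ) →
      ‖wp z'‖ ≤ k₂ * Real.sqrt (c₂ / c₁) * ‖wp z₀‖ * Real.exp (-k₁ * (z' - z₀)) := by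
    intro z' hz' hsmall
    set u : ℝ → ℝ := fun s => V (wp s) (vp s) s with hu
    set a : ℝ → ℝ := fun τ => -(c₃/c₂) + (c₄ * γ₁ τ + c₅ * γ₂ τ)/c₁ with ha
    set A : ℝ → ℝ := fun s => ∫ τ in z₀..s, a τ with hA
    have hAderiv : ∀ s, HasDerivAt A (a s) s := fun s =>
      (hacont.integral_hasStrictDerivAt z₀ s).hasDerivAt
    have hstep : ∀ τ, z₀ ≤ τ → τ ≤ z' → ∃ d, HasDerivAt u d τ ∧ d ≤ a τ * u τ := by
      intro τ hτ1 hτ2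
      have hwδ' : ‖wp τ‖ < δ := hsmall τ hτ1 hτ2
      have hdiff := hVdiff (wp τ) hwδ' (vp τ) τ
      set L := fderiv ℝ (fun p : EuclideanSpace ℝ (Fin n) × EuclideanSpace ℝ (Fin m) × ℝ =>
        V p.1 p.2.1 p.2.2) (wp τ, vp τ, τ) with hL
      have hLf : HasFDerivAt (fun p : EuclideanSpace ℝ (Fin n) × EuclideanSpace ℝ (Fin m) × ℝ =>
          V p.1 p.2.1 p.2.2) L (wp τ, vp τ, τ) := hdiff.hasFDerivAt
      have hP : HasDerivAt (fun s => ((wp s, vp s, s) :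
            EuclideanSpace ℝ (Fin n) × EuclideanSpace ℝ (Fin m) × ℝ))
          (φ₁ (wp τ) (vp τ) τ + g₁ (wp τ) (vp τ) τ,
            φ₂ (wp τ) (vp τ) τ + g₂ (wp τ) (vp τ) τ, 1) τ :=
        (hwp τ hτ1).prodMk ((hvp τ hτ1).prodMk (hasDerivAt_id τ))
      have hu' : HasDerivAt u (L (φ₁ (wp τ) (vp τ) τ + g₁ (wp τ) (vp τ) τ,
          φ₂ (wp τ) (vp τ) τ + g₂ (wp τ) (vp τ) τ, 1)) τ := by have := hLf.comp_hasDerivAt τ hP; exact this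
      have hwpart : HasFDerivAt (fun w' => V w' (vp τ) τ)
          (L.comp (ContinuousLinearMap.inl ℝ (EuclideanSpace ℝ (Fin n))
            (EuclideanSpace ℝ (Fin m) × ℝ))) (wp τ) :=
        by have := hLf.comp (f := fun e => (e, vp τ, τ)) (wp τ) (hasFDerivAt_prodMk_left (𝕜 := ℝ) (wp τ) (vp τ, τ)); exact this
      have hvpart : HasFDerivAt (fun v' => V (wp τ) v' τ)
          (L.comp (((0 : EuclideanSpace ℝ (Fin m) →L[ℝ] EuclideanSpace ℝ (Fin n))).prod
            ((ContinuousLinearMap.id ℝ (EuclideanSpace ℝ (Fin m))).prod 0))) (vp τ) :=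
        by have := hLf.comp (f := fun v' => (wp τ, v', τ)) (vp τ) ((hasFDerivAt_const (wp τ) (vp τ)).prodMk
          ((hasFDerivAt_id (vp τ)).prodMk (hasFDerivAt_const τ (vp τ)))); exact this
      have hzpart : HasDerivAt (fun z'' => V (wp τ) (vp τ) z'') (L (0, 0, 1)) τ :=
        by have := hLf.comp_hasDerivAt τ ((hasDerivAt_const τ (wp τ)).prodMk
          ((hasDerivAt_const τ (vp τ)).prodMk (hasDerivAt_id τ))); exact this
      have hdecay := hVdecay (wp τ) hwδ' (vp τ) τ
      rw [hzpart.deriv, hwpart.fderiv, hvpart.fderiv] at hdecay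
      simp only [ContinuousLinearMap.comp_apply, ContinuousLinearMap.inl_apply,
        ContinuousLinearMap.prod_apply, ContinuousLinearMap.coe_id', id_eq,
        ContinuousLinearMap.zero_apply] at hdecay
      have hnw := hVw (wp τ) hwδ' (vp τ) τ
      rw [hwpart.fderiv] at hnw
      have hnv := hVv (wp τ) hwδ' (vp τ) τ
      rw [hvpart.fderiv] at hnv
      have hb1 : L (g₁ (wp τ) (vp τ) τ, 0) ≤ c₄ * γ₁ τ * ‖wp τ‖^2 := by
        have h1 := (L.comp (ContinuousLinearMap.inl ℝ (EuclideanSpace ℝ (Fin n))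
          (EuclideanSpace ℝ (Fin m) × ℝ))).le_opNorm (g₁ (wp τ) (vp τ) τ)
        have h2 : ‖(L.comp (ContinuousLinearMap.inl ℝ (EuclideanSpace ℝ (Fin n))
              (EuclideanSpace ℝ (Fin m) × ℝ)))‖ * ‖g₁ (wp τ) (vp τ) τ‖
            ≤ (c₄ * ‖wp τ‖) * (γ₁ τ * ‖wp τ‖) :=
          mul_le_mul hnw (hg₁ _ _ _) (norm_nonneg _) (by positivity)
        have h3 : L (g₁ (wp τ) (vp τ) τ, 0)
            ≤ ‖(L.comp (ContinuousLinearMap.inl ℝ (EuclideanSpace ℝ (Fin n))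
              (EuclideanSpace ℝ (Fin m) × ℝ))) (g₁ (wp τ) (vp τ) τ)‖ := by
          simp only [ContinuousLinearMap.comp_apply, ContinuousLinearMap.inl_apply,
            Real.norm_eq_abs]
          exact le_abs_self _
        nlinarith [h1, h2, h3]
      have hb2 : L (0, g₂ (wp τ) (vp τ) τ, 0) ≤ c₅ * γ₂ τ * ‖wp τ‖^2 := by
        set M := L.comp (((0 : EuclideanSpace ℝ (Fin m) →L[ℝ] EuclideanSpace ℝ (Fin n))).prod
          ((ContinuousLinearMap.id ℝ (EuclideanSpace ℝ (Fin m))).prod 0)) with hM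
        have h1 := M.le_opNorm (g₂ (wp τ) (vp τ) τ)
        have h2 : ‖M‖ * ‖g₂ (wp τ) (vp τ) τ‖ ≤ (c₅ * ‖wp τ‖) * (γ₂ τ * ‖wp τ‖) :=
          mul_le_mul hnv (hg₂ _ _ _) (norm_nonneg _) (by positivity)
        have h3 : L (0, g₂ (wp τ) (vp τ) τ, 0) ≤ ‖M (g₂ (wp τ) (vp τ) τ)‖ := by
          rw [hM]
          simp only [ContinuousLinearMap.comp_apply, ContinuousLinearMap.prod_apply,
            ContinuousLinearMap.coe_id', id_eq, ContinuousLinearMap.zero_apply,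
            Real.norm_eq_abs]
          exact le_abs_self _
        nlinarith [h1, h2, h3]
      have hLsum : L (φ₁ (wp τ) (vp τ) τ + g₁ (wp τ) (vp τ) τ,
            φ₂ (wp τ) (vp τ) τ + g₂ (wp τ) (vp τ) τ, 1)
          = L (0, 0, 1) + L (φ₁ (wp τ) (vp τ) τ, 0) + L (0, φ₂ (wp τ) (vp τ) τ, 0)
            + L (g₁ (wp τ) (vp τ) τ, 0) + L (0, g₂ (wp τ) (vp τ) τ, 0) := by
        rw [← map_add, ← map_add, ← map_add, ← map_add]
        congr 1
        simp [Prod.ext_iff]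
      have hlow := hVlow (wp τ) hwδ' (vp τ) τ
      have hup := hVup (wp τ) hwδ' (vp τ) τ
      have hkey1 : (c₃/c₂) * u τ ≤ c₃ * ‖wp τ‖^2 := by
        have h := mul_le_mul_of_nonneg_left hup (le_of_lt (div_pos hc₃ hc₂))
        have he : c₃/c₂ * (c₂ * ‖wp τ‖^2) = c₃ * ‖wp τ‖^2 := by field_simp; try ring
        linarith
      have hγτ : 0 ≤ c₄ * γ₁ τ + c₅ * γ₂ τ :=
        add_nonneg (mul_nonneg hc₄.le (hγ₁pos τ)) (mul_nonneg hc₅.le (hγ₂pos τ))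
      have hkey2 : (c₄ * γ₁ τ + c₅ * γ₂ τ) * ‖wp τ‖^2
          ≤ ((c₄ * γ₁ τ + c₅ * γ₂ τ)/c₁) * u τ := by
        have h := mul_le_mul_of_nonneg_left hlow (div_nonneg hγτ hc₁.le)
        have he : (c₄ * γ₁ τ + c₅ * γ₂ τ)/c₁ * (c₁ * ‖wp τ‖^2)
            = (c₄ * γ₁ τ + c₅ * γ₂ τ) * ‖wp τ‖^2 := by field_simp; try ring
        linarith
      have hau : a τ * u τ = -((c₃/c₂) * u τ) + ((c₄ * γ₁ τ + c₅ * γ₂ τ)/c₁) * u τ := by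
        rw [ha]; ring
      refine ⟨_, hu', ?_⟩
      rw [hLsum, hau]
      nlinarith [hdecay, hb1, hb2, hkey1, hkey2]
    have hFstep : ∀ τ, z₀ ≤ τ → τ ≤ z' →
        ∃ d, HasDerivAt (fun s => Real.exp (-(A s)) * u s) d τ ∧ d ≤ 0 := by
      intro τ hτ1 hτ2
      obtain ⟨d, hd, hdle⟩ := hstep τ hτ1 hτ2
      have hE : HasDerivAt (fun s => Real.exp (-(A s))) (Real.exp (-(A τ)) * (-(a τ))) τ :=
        ((hAderiv τ).neg).exp
      refine ⟨_, hE.mul hd, ?_⟩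
      have he := Real.exp_pos (-(A τ))
      nlinarith [mul_le_mul_of_nonneg_left hdle he.le]
    have hanti : AntitoneOn (fun s => Real.exp (-(A s)) * u s) (Set.Icc z₀ z') := by
      apply antitoneOn_of_deriv_nonpos (convex_Icc _ _)
      · intro x hx
        obtain ⟨d, hd, _⟩ := hFstep x hx.1 hx.2
        exact hd.continuousAt.continuousWithinAt
      · intro x hx
        rw [interior_Icc] at hx
        obtain ⟨d, hd, _⟩ := hFstep x hx.1.le hx.2.le
        exact hd.differentiableAt.differentiableWithinAt
      · intro x hx
        rw [interior_Icc] at hx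
        obtain ⟨d, hd, hd0⟩ := hFstep x hx.1.le hx.2.le
        rw [hd.deriv]; exact hd0
    have hF : Real.exp (-(A z')) * u z' ≤ Real.exp (-(A z₀)) * u z₀ :=
      hanti (Set.left_mem_Icc.mpr hz') (Set.right_mem_Icc.mpr hz') hz'
    have hAz₀ : A z₀ = 0 := intervalIntegral.integral_same
    rw [hAz₀] at hF
    simp only [neg_zero, Real.exp_zero, one_mul] at hF
    have huz : u z' ≤ Real.exp (A z') * u z₀ := by
      have h := mul_le_mul_of_nonneg_left hF (Real.exp_pos (A z')).le
      rw [← mul_assoc, ← Real.exp_add] at h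
      simpa using h
    have hintγ₁ : IntervalIntegrable γ₁ MeasureTheory.volume z₀ z' :=
      hγ₁cont.intervalIntegrable _ _
    have hintγ₂ : IntervalIntegrable γ₂ MeasureTheory.volume z₀ z' :=
      hγ₂cont.intervalIntegrable _ _
    have hAval : A z' = -(c₃/c₂) * (z' - z₀)
        + (c₄ * (∫ τ in z₀..z', γ₁ τ) + c₅ * (∫ τ in z₀..z', γ₂ τ))/c₁ := by
      simp only [hA, ha]
      rw [intervalIntegral.integral_add intervalIntegrable_const
          (((hintγ₁.const_mul c₄).add (hintγ₂.const_mul c₅)).div_const c₁),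
        intervalIntegral.integral_const,
        intervalIntegral.integral_div,
        intervalIntegral.integral_add (hintγ₁.const_mul c₄) (hintγ₂.const_mul c₅),
        intervalIntegral.integral_const_mul, intervalIntegral.integral_const_mul]
      simp [smul_eq_mul]
      ring
    have hABound : A z' ≤ -(2*k₁) * (z' - z₀) + η/c₁ := by
      have hS := hint z' hz'
      have hdiv : (c₄ * (∫ τ in z₀..z', γ₁ τ) + c₅ * (∫ τ in z₀..z', γ₂ τ))/c₁
          ≤ (κ*(z'-z₀) + η)/c₁ := (div_le_div_iff_of_pos_right hc₁).mpr hS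
      have heq : -(c₃/c₂)*(z'-z₀) + (κ*(z'-z₀)+η)/c₁
          = -(2*(c₃/(2*c₂) - κ/(2*c₁)))*(z'-z₀) + η/c₁ := by
        field_simp
        ring
      rw [hAval, hk₁]
      linarith
    have hlow' := hVlow (wp z') (hsmall z' hz' le_rfl) (vp z') z'
    have hup' := hVup (wp z₀) hw0δ (vp z₀) z₀
    have hu0 : (0:ℝ) ≤ u z₀ :=
      le_trans (by positivity) (hVlow (wp z₀) hw0δ (vp z₀) z₀)
    have hexp : Real.exp (A z') ≤ Real.exp (-(2*k₁)*(z'-z₀) + η/c₁) :=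
      Real.exp_le_exp.mpr hABound
    have hchain : c₁ * ‖wp z'‖^2
        ≤ Real.exp (-(2*k₁)*(z'-z₀) + η/c₁) * (c₂ * ‖wp z₀‖^2) :=
      calc c₁ * ‖wp z'‖^2 ≤ u z' := hlow'
        _ ≤ Real.exp (A z') * u z₀ := huz
        _ ≤ Real.exp (-(2*k₁)*(z'-z₀) + η/c₁) * (c₂*‖wp z₀‖^2) :=
            mul_le_mul hexp hup' hu0 (Real.exp_pos _).le
    set R := k₂ * Real.sqrt (c₂/c₁) * ‖wp z₀‖ * Real.exp (-k₁ * (z' - z₀)) with hR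
    have hRnonneg : 0 ≤ R := by rw [hR]; positivity
    have hR2 : ‖wp z'‖^2 ≤ R^2 := by
      have e1 : Real.exp (η/(2*c₁)) ^ 2 = Real.exp (η/c₁) := by
        rw [sq, ← Real.exp_add]
        congr 1
        field_simp
        ring
      have e2 : Real.exp (-k₁*(z'-z₀)) ^ 2 = Real.exp (-(2*k₁)*(z'-z₀)) := by
        rw [sq, ← Real.exp_add]
        congr 1
        ring
      have e3 : Real.sqrt (c₂/c₁) ^ 2 = c₂/c₁ := Real.sq_sqrt (by positivity)
      have hRsq : R^2 = Real.exp (-(2*k₁)*(z'-z₀) + η/c₁) * (c₂/c₁ * ‖wp z₀‖^2) := by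
        rw [hR, hk₂, mul_pow, mul_pow, mul_pow, e1, e2, e3, Real.exp_add]
        ring
      rw [hRsq, show Real.exp (-(2*k₁)*(z'-z₀) + η/c₁) * (c₂/c₁ * ‖wp z₀‖^2)
          = (Real.exp (-(2*k₁)*(z'-z₀) + η/c₁) * (c₂ * ‖wp z₀‖^2))/c₁ by
            field_simp; try ring, le_div_iff₀ hc₁]
      nlinarith [hchain]
    have hfin := Real.sqrt_le_sqrt hR2
    rw [Real.sqrt_sq (norm_nonneg _), Real.sqrt_sq hRnonneg] at hfin
    exact hfin
  -- the solution remains in the ball for all time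
  have hall : ∀ z', z₀ ≤ z' → ‖wp z'‖ < δ := by
    by_contra hcon
    push_neg at hcon
    obtain ⟨z₁, hz₁, hz₁δ⟩ := hcon
    set T : Set ℝ := {s | z₀ ≤ s ∧ δ ≤ ‖wp s‖} with hT
    have hTne : T.Nonempty := ⟨z₁, hz₁, hz₁δ⟩
    have hTbdd : BddBelow T := ⟨z₀, fun s hs => hs.1⟩
    set s₀ := sInf T with hs₀
    have hs₀z₀ : z₀ ≤ s₀ := le_csInf hTne fun s hs => hs.1
    obtain ⟨seq, -, hseqtend, hseqmem⟩ := exists_seq_tendsto_sInf hTne hTbdd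
    have hws₀ : δ ≤ ‖wp s₀‖ := by
      have hcont : Filter.Tendsto (fun k => ‖wp (seq k)‖) Filter.atTop (nhds ‖wp s₀‖) :=
        ((hwp s₀ hs₀z₀).continuousAt.tendsto.comp hseqtend).norm
      exact ge_of_tendsto hcont (Filter.Eventually.of_forall fun k => (hseqmem k).2)
    have hsmall : ∀ τ, z₀ ≤ τ → τ < s₀ → ‖wp τ‖ < δ := by
      intro τ h1 h2
      by_contra h
      push_neg at h
      exact absurd (csInf_le hTbdd ⟨h1, h⟩) (not_le.mpr h2)
    have h0s : z₀ < s₀ := by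
      rcases lt_or_eq_of_le hs₀z₀ with h | h
      · exact h
      · rw [← h] at hws₀; linarith
    have hBbound : ∀ τ, z₀ ≤ τ → τ < s₀ → ‖wp τ‖ ≤ k₂ * Real.sqrt (c₂/c₁) * ‖wp z₀‖ := by
      intro τ h1 h2
      have := key τ h1 (fun σ hσ1 hσ2 => hsmall σ hσ1 (lt_of_le_of_lt hσ2 h2))
      have hexple : Real.exp (-k₁ * (τ - z₀)) ≤ 1 :=
        Real.exp_le_one_iff.mpr (by nlinarith)
      have hB0 : 0 ≤ k₂ * Real.sqrt (c₂/c₁) * ‖wp z₀‖ := by positivity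
      nlinarith [this]
    have hseq2 : Filter.Tendsto (fun k : ℕ => s₀ - 1/(k+1)) Filter.atTop (nhds s₀) := by
      have h := tendsto_one_div_add_atTop_nhds_zero_nat (𝕜 := ℝ)
      simpa using Filter.Tendsto.sub (tendsto_const_nhds (x := s₀)) h
    have hev : ∀ᶠ k : ℕ in Filter.atTop, (1:ℝ)/(k+1) < s₀ - z₀ :=
      tendsto_one_div_add_atTop_nhds_zero_nat.eventually_lt_const (by linarith)
    have hbound : ∀ᶠ k : ℕ in Filter.atTop,
        ‖wp (s₀ - 1/(k+1))‖ ≤ k₂ * Real.sqrt (c₂/c₁) * ‖wp z₀‖ := by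
      filter_upwards [hev] with k hk
      have hpos : (0:ℝ) < 1/(k+1) := by positivity
      exact hBbound _ (by linarith) (by linarith)
    have hlim : Filter.Tendsto (fun k : ℕ => ‖wp (s₀ - 1/(k+1))‖)
        Filter.atTop (nhds ‖wp s₀‖) :=
      ((hwp s₀ hs₀z₀).continuousAt.tendsto.comp hseq2).norm
    have hfinal : ‖wp s₀‖ ≤ k₂ * Real.sqrt (c₂/c₁) * ‖wp z₀‖ := le_of_tendsto hlim hbound
    have hBδ : k₂ * Real.sqrt (c₂/c₁) * ‖wp z₀‖ < δ := by
      have h1 : k₂ * Real.sqrt (c₂/c₁) * ‖wp z₀‖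
          < k₂ * Real.sqrt (c₂/c₁) * ((δ/k₂) * Real.sqrt (c₁/c₂)) :=
        mul_lt_mul_of_pos_left hinit (by positivity)
      have hss : Real.sqrt (c₂/c₁) * Real.sqrt (c₁/c₂) = 1 := by
        rw [← Real.sqrt_mul (by positivity), show c₂/c₁*(c₁/c₂) = 1 by field_simp]
        exact Real.sqrt_one
      have h2 : k₂ * Real.sqrt (c₂/c₁) * ((δ/k₂) * Real.sqrt (c₁/c₂)) = δ := by
        calc k₂ * Real.sqrt (c₂/c₁) * ((δ/k₂) * Real.sqrt (c₁/c₂))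
            = (k₂ * (δ/k₂)) * (Real.sqrt (c₂/c₁) * Real.sqrt (c₁/c₂)) := by ring
          _ = (k₂ * (δ/k₂)) * 1 := by rw [hss]
          _ = δ := by field_simp
      linarith
    linarith
  intro z hz
  exact key z hz fun τ h1 _ => hall τ h1
end

section
/- For the Kuramoto–Sakaguchi star network θ̇ᵢ = ω + A sin(θ₀ − θᵢ − α) for i = 1,2 and θ̇₀ = ω + Σ_{j=1}^{2} A sin(θⱼ − θ₀ − α), with equal coupling strengths A₁ = A₂ = A > 0, zero detuning u = 0, and phase shift α ∈ (0, π/2): if α > arctan(√3), then there exists no exponentially stable remote synchronization manifold contained in M = {θ ∈ 𝕊³ : θ₁ = θ₂}; in particular both positively invariant manifolds M₁ = {θ₁ = θ₂, θ₀ − θ₁ = c(α)} and M₁' = {θ₁ = θ₂, θ₀ − θ₁ = π + c(α)}, with c(α) = −arctan(sin α/(3 cos α)), are unstable. -/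
set_option maxHeartbeats 1000000

open Real

/-- c(α) = −arctan(sin α / (3 cos α)). -/
noncomputable def cAlpha (α : ℝ) : ℝ := -Real.arctan (Real.sin α / (3 * Real.cos α))

/-- The point (θ₀(t), θ₁(t), θ₂(t)) viewed in ℝ³ (Euclidean). -/
noncomputable def trajPt (θ0 θ1 θ2 : ℝ → ℝ) (t : ℝ) : EuclideanSpace ℝ (Fin 3) :=
  WithLp.toLp 2 ![θ0 t, θ1 t, θ2 t]

/-- Solutions of the Kuramoto–Sakaguchi star network with coupling A, phase shift α,
natural frequency ω and detuning u of the central oscillator 0. -/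
def IsSol (A α ω u : ℝ) (θ0 θ1 θ2 : ℝ → ℝ) : Prop :=
  (∀ t ≥ (0:ℝ), HasDerivAt θ1 (ω + A * Real.sin (θ0 t - θ1 t - α)) t) ∧
  (∀ t ≥ (0:ℝ), HasDerivAt θ2 (ω + A * Real.sin (θ0 t - θ2 t - α)) t) ∧
  (∀ t ≥ (0:ℝ), HasDerivAt θ0
    (ω + (A * Real.sin (θ1 t - θ0 t - α) + A * Real.sin (θ2 t - θ0 t - α)) + u) t)

/-- The remote synchronization manifold M = {θ₁ = θ₂ (mod 2π)}, as a (2π-periodic)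
subset of ℝ³ representing a subset of the torus 𝕊³. -/
def Msync : Set (EuclideanSpace ℝ (Fin 3)) :=
  {θ | ∃ k : ℤ, θ 1 - θ 2 = 2 * π * (k : ℝ)}

/-- The phase-locked remote synchronization manifold M₁ = {θ₁ = θ₂, θ₀ − θ₁ = c(α)}. -/
def M1 (α : ℝ) : Set (EuclideanSpace ℝ (Fin 3)) :=
  {θ | (∃ k : ℤ, θ 1 - θ 2 = 2 * π * (k : ℝ)) ∧
       (∃ k : ℤ, θ 0 - θ 1 = cAlpha α + 2 * π * (k : ℝ))}

/-- The phase-locked remote synchronization manifold M₁' = {θ₁ = θ₂, θ₀ − θ₁ = π + c(α)}. -/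
def M1' (α : ℝ) : Set (EuclideanSpace ℝ (Fin 3)) :=
  {θ | (∃ k : ℤ, θ 1 - θ 2 = 2 * π * (k : ℝ)) ∧
       (∃ k : ℤ, θ 0 - θ 1 = π + cAlpha α + 2 * π * (k : ℝ))}

/-- N is exponentially stable along the dynamics. -/
def ExpStable (A α ω u : ℝ) (N : Set (EuclideanSpace ℝ (Fin 3))) : Prop :=
  ∃ δ > (0:ℝ), ∃ k > (0:ℝ), ∃ lam > (0:ℝ),
    ∀ θ0 θ1 θ2 : ℝ → ℝ, IsSol A α ω u θ0 θ1 θ2 →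
      Metric.infDist (trajPt θ0 θ1 θ2 0) N < δ →
      ∀ t ≥ (0:ℝ),
        Metric.infDist (trajPt θ0 θ1 θ2 t) N ≤
          k * Metric.infDist (trajPt θ0 θ1 θ2 0) N * Real.exp (-lam * t)

/-- N is positively invariant along the dynamics. -/
def PosInvariant (A α ω u : ℝ) (N : Set (EuclideanSpace ℝ (Fin 3))) : Prop :=
  ∀ θ0 θ1 θ2 : ℝ → ℝ, IsSol A α ω u θ0 θ1 θ2 →
    trajPt θ0 θ1 θ2 0 ∈ N → ∀ t ≥ (0:ℝ), trajPt θ0 θ1 θ2 t ∈ N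

/-! ### Auxiliary material -/

section Aux

lemma trajPt_apply0 (θ0 θ1 θ2 : ℝ → ℝ) (t : ℝ) : trajPt θ0 θ1 θ2 t 0 = θ0 t := rfl
lemma trajPt_apply1 (θ0 θ1 θ2 : ℝ → ℝ) (t : ℝ) : trajPt θ0 θ1 θ2 t 1 = θ1 t := rfl
lemma trajPt_apply2 (θ0 θ1 θ2 : ℝ → ℝ) (t : ℝ) : trajPt θ0 θ1 θ2 t 2 = θ2 t := rfl

lemma coord_le_dist (x y : EuclideanSpace ℝ (Fin 3)) (i : Fin 3) :
    |x i - y i| ≤ dist x y := by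
  rw [EuclideanSpace.dist_eq]
  have h1 : |x i - y i| = Real.sqrt (dist (x i) (y i) ^ 2) := by
    rw [Real.sqrt_sq dist_nonneg, Real.dist_eq]
  rw [h1]
  apply Real.sqrt_le_sqrt
  exact Finset.single_le_sum (f := fun j => dist (x j) (y j) ^ 2)
    (fun j _ => by positivity) (Finset.mem_univ i)

lemma pair_le_dist (x y : EuclideanSpace ℝ (Fin 3)) (i j : Fin 3) :
    |(x i - x j) - (y i - y j)| ≤ 2 * dist x y := by
  have h1 := coord_le_dist x y i
  have h2 := coord_le_dist x y j
  have h3 : |(x i - x j) - (y i - y j)| ≤ |x i - y i| + |x j - y j| := by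
    rw [show (x i - x j) - (y i - y j) = (x i - y i) - (x j - y j) by ring]
    exact abs_sub _ _
  linarith

lemma dist_le_sum3 (x y : EuclideanSpace ℝ (Fin 3)) :
    dist x y ≤ |x 0 - y 0| + |x 1 - y 1| + |x 2 - y 2| := by
  rw [EuclideanSpace.dist_eq, Fin.sum_univ_three]
  simp only [Real.dist_eq]
  have h : |x 0 - y 0| ^ 2 + |x 1 - y 1| ^ 2 + |x 2 - y 2| ^ 2 ≤
      (|x 0 - y 0| + |x 1 - y 1| + |x 2 - y 2|) ^ 2 := by
    nlinarith [abs_nonneg (x 0 - y 0), abs_nonneg (x 1 - y 1), abs_nonneg (x 2 - y 2)]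
  calc Real.sqrt (|x 0 - y 0| ^ 2 + |x 1 - y 1| ^ 2 + |x 2 - y 2| ^ 2)
      ≤ Real.sqrt ((|x 0 - y 0| + |x 1 - y 1| + |x 2 - y 2|) ^ 2) := Real.sqrt_le_sqrt h
    _ = _ := Real.sqrt_sq (by positivity)

lemma le_infDist_of (x : EuclideanSpace ℝ (Fin 3)) (N : Set (EuclideanSpace ℝ (Fin 3)))
    (hN : N.Nonempty) (b : ℝ) (h : ∀ n ∈ N, b ≤ dist x n) : b ≤ Metric.infDist x N := by
  rw [Metric.infDist_eq_iInf]
  haveI : Nonempty ↥N := hN.to_subtype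
  exact le_ciInf fun n => h n n.2

lemma arctan_le_self_of_nonneg {x : ℝ} (h : 0 ≤ x) : arctan x ≤ x := by
  by_contra hc
  push_neg at hc
  have hy : 0 < arctan x := lt_of_le_of_lt h hc
  have h2 := Real.lt_tan hy (Real.arctan_lt_pi_div_two x)
  rw [Real.tan_arctan] at h2
  linarith

lemma abs_arctan_le (x : ℝ) : |arctan x| ≤ |x| := by
  rcases le_or_gt 0 x with h | h
  · rw [abs_of_nonneg (by simpa using Real.arctan_strictMono.monotone h : (0:ℝ) ≤ arctan x),
      abs_of_nonneg h]
    exact arctan_le_self_of_nonneg h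
  · have h0 : 0 ≤ -x := by linarith
    rw [abs_of_nonpos (by simpa using Real.arctan_strictMono.monotone h.le : arctan x ≤ 0),
      abs_of_neg h]
    have h1 := arctan_le_self_of_nonneg h0
    rw [Real.arctan_neg] at h1
    linarith

lemma cos_alpha_pos {α : ℝ} (hα : α ∈ Set.Ioo 0 (π / 2)) : 0 < Real.cos α :=
  Real.cos_pos_of_mem_Ioo ⟨by linarith [hα.1, Real.pi_pos], hα.2⟩

lemma sin_alpha_pos {α : ℝ} (hα : α ∈ Set.Ioo 0 (π / 2)) : 0 < Real.sin α :=
  Real.sin_pos_of_pos_of_lt_pi hα.1 (by linarith [hα.2, Real.pi_pos])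

lemma sin_cAlpha (α : ℝ) :
    Real.sin (cAlpha α) = -((Real.sin α / (3 * Real.cos α)) /
      Real.sqrt (1 + (Real.sin α / (3 * Real.cos α)) ^ 2)) := by
  rw [cAlpha, Real.sin_neg, Real.sin_arctan]

lemma cos_cAlpha (α : ℝ) :
    Real.cos (cAlpha α) = 1 / Real.sqrt (1 + (Real.sin α / (3 * Real.cos α)) ^ 2) := by
  rw [cAlpha, Real.cos_neg, Real.cos_arctan]

lemma I1 {α : ℝ} (hα : α ∈ Set.Ioo 0 (π / 2)) :
    Real.sin (cAlpha α - α) + 2 * Real.sin (cAlpha α + α) = 0 := by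
  have hc := cos_alpha_pos hα
  set S := Real.sin α / (3 * Real.cos α) with hS
  have hr : Real.sqrt (1 + S ^ 2) ≠ 0 := by positivity
  rw [Real.sin_sub, Real.sin_add, sin_cAlpha, cos_cAlpha]
  field_simp [hS]
  ring

lemma I2 {α : ℝ} (hα : α ∈ Set.Ioo 0 (π / 2)) (hαbig : Real.arctan (Real.sqrt 3) < α) :
    Real.cos (cAlpha α - α) < 0 := by
  have hc := cos_alpha_pos hα
  have hs := sin_alpha_pos hα
  have htan : Real.sqrt 3 < Real.tan α := by
    have h := Real.tan_lt_tan_of_lt_of_lt_pi_div_two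
      (Real.neg_pi_div_two_lt_arctan (Real.sqrt 3)) hα.2 hαbig
    rwa [Real.tan_arctan] at h
  have h1 : Real.sqrt 3 * Real.cos α < Real.sin α := by
    have h := mul_lt_mul_of_pos_right htan hc
    rwa [Real.tan_eq_sin_div_cos, div_mul_cancel₀ _ hc.ne'] at h
  have hsq : Real.sqrt 3 * Real.sqrt 3 = 3 := Real.mul_self_sqrt (by norm_num)
  have h3 : 3 * Real.cos α ^ 2 < Real.sin α ^ 2 := by
    have h2 := mul_self_lt_mul_self (by positivity) h1
    nlinarith
  set S := Real.sin α / (3 * Real.cos α) with hS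
  have hr : (0:ℝ) < Real.sqrt (1 + S ^ 2) := by positivity
  have key : Real.cos α - S * Real.sin α < 0 := by
    have hk : (Real.cos α - S * Real.sin α) * (3 * Real.cos α)
        = 3 * Real.cos α ^ 2 - Real.sin α ^ 2 := by
      rw [hS]; field_simp
    nlinarith
  have heq : Real.cos (cAlpha α - α) = (Real.cos α - S * Real.sin α) / Real.sqrt (1 + S ^ 2) := by
    rw [Real.cos_sub, sin_cAlpha, cos_cAlpha, ← hS]
    field_simp
    ring
  rw [heq]
  exact div_neg_of_neg_of_pos key hr

lemma I3 {α : ℝ} (hα : α ∈ Set.Ioo 0 (π / 2)) :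
    0 < Real.cos (cAlpha α - α) + 2 * Real.cos (cAlpha α + α) := by
  have hc := cos_alpha_pos hα
  have hs := sin_alpha_pos hα
  set S := Real.sin α / (3 * Real.cos α) with hS
  have hSpos : 0 < S := by rw [hS]; positivity
  have hr : (0:ℝ) < Real.sqrt (1 + S ^ 2) := by positivity
  have heq : Real.cos (cAlpha α - α) + 2 * Real.cos (cAlpha α + α)
      = (3 * Real.cos α + S * Real.sin α) / Real.sqrt (1 + S ^ 2) := by
    rw [Real.cos_sub, Real.cos_add, sin_cAlpha, cos_cAlpha, ← hS]
    field_simp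
    ring
  rw [heq]
  positivity

/-! ### The explicit solutions -/

noncomputable def dd (C K t : ℝ) : ℝ := 2 * Real.arctan (C * Real.exp (K * t))

noncomputable def th1 (A α ω b1 C K : ℝ) (t : ℝ) : ℝ :=
  b1 + ∫ s in (0:ℝ)..t, (ω + A * Real.sin (cAlpha α + dd C K s - α))

lemma hasDerivAt_dd (C K t : ℝ) :
    HasDerivAt (dd C K) (K * Real.sin (dd C K t)) t := by
  unfold dd
  have h1 : HasDerivAt (fun t : ℝ => K * t) K t := by
    simpa using (hasDerivAt_id t).const_mul K
  have h2 : HasDerivAt (fun t : ℝ => Real.exp (K * t)) (Real.exp (K * t) * K) t :=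
    (Real.hasDerivAt_exp (K * t)).comp t h1
  have h3 : HasDerivAt (fun t : ℝ => C * Real.exp (K * t)) (C * (Real.exp (K * t) * K)) t :=
    h2.const_mul C
  have h4 : HasDerivAt (fun t : ℝ => Real.arctan (C * Real.exp (K * t)))
      ((1 / (1 + (C * Real.exp (K * t)) ^ 2)) * (C * (Real.exp (K * t) * K))) t :=
    by have := (Real.hasDerivAt_arctan (C * Real.exp (K * t))).comp t h3; exact this
  have h5 := h4.const_mul 2
  refine h5.congr_deriv ?_
  set u := C * Real.exp (K * t) with hu
  rw [Real.sin_two_mul, Real.sin_arctan, Real.cos_arctan]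
  have h7 : (0:ℝ) < 1 + u ^ 2 := by positivity
  have h8 : Real.sqrt (1 + u^2) ≠ 0 := by positivity
  have h6 : Real.sqrt (1 + u ^ 2) * Real.sqrt (1 + u ^ 2) = 1 + u ^ 2 :=
    Real.mul_self_sqrt (by positivity)
  field_simp
  ring_nf
  rw [Real.sq_sqrt h7.le, hu]
  ring

lemma hasDerivAt_int (g : ℝ → ℝ) (hg : Continuous g) (b t : ℝ) :
    HasDerivAt (fun t => b + ∫ s in (0:ℝ)..t, g s) (g t) t := by
  have h := intervalIntegral.integral_hasDerivAt_right (hg.intervalIntegrable 0 t)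
    (hg.stronglyMeasurableAtFilter _ _) hg.continuousAt
  simpa using h.const_add b

lemma continuous_dd (C K : ℝ) : Continuous (dd C K) := by
  unfold dd
  exact continuous_const.mul (Real.continuous_arctan.comp
    (continuous_const.mul (Real.continuous_exp.comp (continuous_const.mul continuous_id))))

lemma hasDerivAt_th1 (A α ω b1 C K t : ℝ) :
    HasDerivAt (th1 A α ω b1 C K) (ω + A * Real.sin (cAlpha α + dd C K t - α)) t := by
  have hg : Continuous (fun s => ω + A * Real.sin (cAlpha α + dd C K s - α)) :=
    continuous_const.add (continuous_const.mul (Real.continuous_sin.comp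
      ((continuous_const.add (continuous_dd C K)).sub continuous_const)))
  exact hasDerivAt_int _ hg b1 t

lemma th1_zero (A α ω b1 C K : ℝ) : th1 A α ω b1 C K 0 = b1 := by
  simp [th1, intervalIntegral.integral_same]

lemma dd_zero (C K : ℝ) : dd C K 0 = 2 * Real.arctan C := by
  simp [dd]

lemma isSol_trans (A α ω b1 C : ℝ) (j m : ℤ)
    (hI1 : Real.sin (cAlpha α - α) + 2 * Real.sin (cAlpha α + α) = 0) :
    IsSol A α ω 0
      (fun t => th1 A α ω b1 C (-(A * Real.cos (cAlpha α - α))) t +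
        (cAlpha α + dd C (-(A * Real.cos (cAlpha α - α))) t + 2 * π * (j:ℝ)))
      (th1 A α ω b1 C (-(A * Real.cos (cAlpha α - α))))
      (fun t => th1 A α ω b1 C (-(A * Real.cos (cAlpha α - α))) t +
        (2 * dd C (-(A * Real.cos (cAlpha α - α))) t - 2 * π * (m:ℝ))) := by
  set c := cAlpha α with hc
  set K := -(A * Real.cos (c - α)) with hK
  refine ⟨fun t _ => ?_, fun t _ => ?_, fun t _ => ?_⟩
  · have harg : (th1 A α ω b1 C K t + (c + dd C K t + 2*π*(j:ℝ))) - th1 A α ω b1 C K t - α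
        = (c + dd C K t - α) + (j:ℝ) * (2*π) := by ring
    rw [harg, Real.sin_add_int_mul_two_pi]
    exact hasDerivAt_th1 A α ω b1 C K t
  · have h := (hasDerivAt_th1 A α ω b1 C K t).add
      (((hasDerivAt_dd C K t).const_mul 2).sub_const (2*π*(m:ℝ)))
    have harg : (th1 A α ω b1 C K t + (c + dd C K t + 2*π*(j:ℝ)))
        - (th1 A α ω b1 C K t + (2 * dd C K t - 2*π*(m:ℝ))) - α
        = (c - dd C K t - α) + ((j + m : ℤ):ℝ) * (2*π) := by push_cast; ring
    have e : ω + A * Real.sin ((th1 A α ω b1 C K t + (c + dd C K t + 2*π*(j:ℝ)))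
        - (th1 A α ω b1 C K t + (2 * dd C K t - 2*π*(m:ℝ))) - α)
        = (ω + A * Real.sin (c + dd C K t - α)) + 2 * (K * Real.sin (dd C K t)) := by
      rw [harg, Real.sin_add_int_mul_two_pi,
        show c + dd C K t - α = (c - α) + dd C K t by ring,
        show c - dd C K t - α = (c - α) - dd C K t by ring,
        Real.sin_add, Real.sin_sub, hK]
      ring
    rw [e]
    exact h
  · have h := (hasDerivAt_th1 A α ω b1 C K t).add
      (((hasDerivAt_dd C K t).const_add c).add_const (2*π*(j:ℝ)))
    have harg1 : th1 A α ω b1 C K t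
        - (th1 A α ω b1 C K t + (c + dd C K t + 2*π*(j:ℝ))) - α
        = (-((c + α) + dd C K t)) + ((-j : ℤ):ℝ) * (2*π) := by push_cast; ring
    have harg2 : (th1 A α ω b1 C K t + (2 * dd C K t - 2*π*(m:ℝ)))
        - (th1 A α ω b1 C K t + (c + dd C K t + 2*π*(j:ℝ))) - α
        = (-((c + α) - dd C K t)) + ((-(j+m) : ℤ):ℝ) * (2*π) := by push_cast; ring
    have e : ω + (A * Real.sin (th1 A α ω b1 C K t
          - (th1 A α ω b1 C K t + (c + dd C K t + 2*π*(j:ℝ))) - α)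
        + A * Real.sin ((th1 A α ω b1 C K t + (2 * dd C K t - 2*π*(m:ℝ)))
          - (th1 A α ω b1 C K t + (c + dd C K t + 2*π*(j:ℝ))) - α)) + 0
        = (ω + A * Real.sin (c + dd C K t - α)) + K * Real.sin (dd C K t) := by
      rw [harg1, harg2, Real.sin_add_int_mul_two_pi, Real.sin_add_int_mul_two_pi,
        Real.sin_neg, Real.sin_neg,
        Real.sin_add (c + α), Real.sin_sub (c + α),
        show c + dd C K t - α = (c - α) + dd C K t by ring,
        Real.sin_add (c - α), hK]
      linear_combination (-(A * Real.cos (dd C K t))) * hI1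
    rw [e]
    exact h

lemma isSol_long (A α ω b1 C : ℝ) (j m : ℤ)
    (hI1 : Real.sin (cAlpha α - α) + 2 * Real.sin (cAlpha α + α) = 0) :
    IsSol A α ω 0
      (fun t => th1 A α ω b1 C (-(A * (Real.cos (cAlpha α - α) + 2 * Real.cos (cAlpha α + α)))) t +
        (cAlpha α + dd C (-(A * (Real.cos (cAlpha α - α) + 2 * Real.cos (cAlpha α + α)))) t + 2 * π * (j:ℝ)))
      (th1 A α ω b1 C (-(A * (Real.cos (cAlpha α - α) + 2 * Real.cos (cAlpha α + α)))))
      (fun t => th1 A α ω b1 C (-(A * (Real.cos (cAlpha α - α) + 2 * Real.cos (cAlpha α + α)))) t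
        - 2 * π * (m:ℝ)) := by
  set c := cAlpha α with hc
  set K := -(A * (Real.cos (c - α) + 2 * Real.cos (c + α))) with hK
  refine ⟨fun t _ => ?_, fun t _ => ?_, fun t _ => ?_⟩
  · have harg : (th1 A α ω b1 C K t + (c + dd C K t + 2*π*(j:ℝ))) - th1 A α ω b1 C K t - α
        = (c + dd C K t - α) + (j:ℝ) * (2*π) := by ring
    rw [harg, Real.sin_add_int_mul_two_pi]
    exact hasDerivAt_th1 A α ω b1 C K t
  · have h := (hasDerivAt_th1 A α ω b1 C K t).sub_const (2*π*(m:ℝ))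
    have harg : (th1 A α ω b1 C K t + (c + dd C K t + 2*π*(j:ℝ)))
        - (th1 A α ω b1 C K t - 2*π*(m:ℝ)) - α
        = (c + dd C K t - α) + ((j + m : ℤ):ℝ) * (2*π) := by push_cast; ring
    rw [harg, Real.sin_add_int_mul_two_pi]
    exact h
  · have h := (hasDerivAt_th1 A α ω b1 C K t).add
      (((hasDerivAt_dd C K t).const_add c).add_const (2*π*(j:ℝ)))
    have harg1 : th1 A α ω b1 C K t
        - (th1 A α ω b1 C K t + (c + dd C K t + 2*π*(j:ℝ))) - α
        = (-((c + α) + dd C K t)) + ((-j : ℤ):ℝ) * (2*π) := by push_cast; ring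
    have harg2 : (th1 A α ω b1 C K t - 2*π*(m:ℝ))
        - (th1 A α ω b1 C K t + (c + dd C K t + 2*π*(j:ℝ))) - α
        = (-((c + α) + dd C K t)) + ((-(j+m) : ℤ):ℝ) * (2*π) := by push_cast; ring
    have e : ω + (A * Real.sin (th1 A α ω b1 C K t
          - (th1 A α ω b1 C K t + (c + dd C K t + 2*π*(j:ℝ))) - α)
        + A * Real.sin ((th1 A α ω b1 C K t - 2*π*(m:ℝ))
          - (th1 A α ω b1 C K t + (c + dd C K t + 2*π*(j:ℝ))) - α)) + 0
        = (ω + A * Real.sin (c + dd C K t - α)) + K * Real.sin (dd C K t) := by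
      rw [harg1, harg2, Real.sin_add_int_mul_two_pi, Real.sin_add_int_mul_two_pi,
        Real.sin_neg, Real.sin_add (c + α),
        show c + dd C K t - α = (c - α) + dd C K t by ring,
        Real.sin_add (c - α), hK]
      linear_combination (-(A * Real.cos (dd C K t))) * hI1
    rw [e]
    exact h

end Aux

/-! ### The master instability lemma -/

lemma no_expStable (A α ω : ℝ) (hA : 0 < A) (hα : α ∈ Set.Ioo 0 (π / 2))
    (hαbig : Real.arctan (Real.sqrt 3) < α)
    (N : Set (EuclideanSpace ℝ (Fin 3))) (hNne : N.Nonempty) (hsub : N ⊆ Msync) :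
    ¬ ExpStable A α ω 0 N := by
  intro hE
  obtain ⟨δ, hδ, k, hk, lam, hlam, H⟩ := hE
  have hI1 := I1 hα
  have hI2 := I2 hα hαbig
  have hI3 := I3 hα
  have hπ := Real.pi_gt_three
  set c := cAlpha α with hcdef
  set ε := min (min (δ/4) (1/(4*k))) 1 with hεdef
  have hεpos : 0 < ε := lt_min (lt_min (by linarith) (by positivity)) one_pos
  have hεδ : ε ≤ δ/4 := le_trans (min_le_left _ _) (min_le_left _ _)
  have hεk : ε ≤ 1/(4*k) := le_trans (min_le_left _ _) (min_le_right _ _)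
  have hε1 : ε ≤ 1 := min_le_right _ _
  by_cases hcase : ∃ q ∈ N, ∃ j : ℤ, |q 0 - q 1 - c - 2*π*(j:ℝ)| < ε
  · -- Case A : transverse instability near c
    obtain ⟨q, hqN, j, hj⟩ := hcase
    obtain ⟨m, hm⟩ := hsub hqN
    set K := -(A * Real.cos (c - α)) with hKdef
    have hKpos : 0 < K := by rw [hKdef]; nlinarith
    set C := ε/6 with hCdef
    have hCpos : 0 < C := by positivity
    have hC1 : C ≤ 1 := by rw [hCdef]; linarith
    set θ1 := th1 A α ω (q 1) C K with hθ1def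
    set θ0 := fun t => θ1 t + (c + dd C K t + 2*π*(j:ℝ)) with hθ0def
    set θ2 := fun t => θ1 t + (2 * dd C K t - 2*π*(m:ℝ)) with hθ2def
    have hsol : IsSol A α ω 0 θ0 θ1 θ2 := isSol_trans A α ω (q 1) C j m hI1
    set d0 := 2 * Real.arctan C with hd0def
    have hd0pos : 0 < d0 := by
      rw [hd0def]
      have h := Real.arctan_strictMono hCpos
      rw [Real.arctan_zero] at h
      linarith
    have hd0le : d0 ≤ 2*C := by
      have := arctan_le_self_of_nonneg hCpos.le
      rw [hd0def]; linarith
    have h10 : θ1 0 = q 1 := th1_zero A α ω (q 1) C K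
    have hdd0 : dd C K 0 = d0 := dd_zero C K
    -- distance at time 0
    have hθ00 : θ0 0 = q 1 + (c + d0 + 2*π*(j:ℝ)) := by
      simp only [hθ0def]
      rw [h10, hdd0]
    have hθ20 : θ2 0 = q 1 + (2*d0 - 2*π*(m:ℝ)) := by
      simp only [hθ2def]
      rw [h10, hdd0]
    have hd : dist (trajPt θ0 θ1 θ2 0) q ≤ 2*ε := by
      apply le_trans (dist_le_sum3 _ _)
      rw [trajPt_apply0, trajPt_apply1, trajPt_apply2, hθ00, hθ20, h10]
      have b0 : |q 1 + (c + d0 + 2*π*(j:ℝ)) - q 0| ≤ d0 + ε := by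
        have e0 : q 1 + (c + d0 + 2*π*(j:ℝ)) - q 0 = d0 - (q 0 - q 1 - c - 2*π*(j:ℝ)) := by ring
        rw [e0]
        have h := abs_sub (d0) (q 0 - q 1 - c - 2*π*(j:ℝ))
        rw [abs_of_pos hd0pos] at h
        linarith [h, hj]
      have b2 : |q 1 + (2*d0 - 2*π*(m:ℝ)) - q 2| = 2*d0 := by
        have e2 : q 1 + (2*d0 - 2*π*(m:ℝ)) - q 2 = 2*d0 := by linear_combination hm
        rw [e2]
        exact abs_of_pos (by linarith)
      simp only [sub_self, abs_zero]
      rw [b2]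
      linarith
    have hinf0 : Metric.infDist (trajPt θ0 θ1 θ2 0) N ≤ 2*ε :=
      le_trans (Metric.infDist_le_dist_of_mem hqN) hd
    have hlt : Metric.infDist (trajPt θ0 θ1 θ2 0) N < δ := by linarith
    set t2 := Real.log C⁻¹ / K with ht2def
    have ht2 : 0 ≤ t2 := by
      apply div_nonneg _ hKpos.le
      exact Real.log_nonneg (one_le_inv_iff₀.mpr ⟨hCpos, hC1⟩)
    have hdd2 : dd C K t2 = π/2 := by
      rw [dd, ht2def, mul_div_cancel₀ _ hKpos.ne', Real.exp_log (by positivity),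
        mul_inv_cancel₀ hCpos.ne', Real.arctan_one]
      ring
    have hbnd := H θ0 θ1 θ2 hsol hlt t2 ht2
    have hlow : (1:ℝ) ≤ Metric.infDist (trajPt θ0 θ1 θ2 t2) N := by
      apply le_infDist_of _ _ hNne
      intro n hn
      obtain ⟨z, hz⟩ := hsub hn
      have hp := pair_le_dist (trajPt θ0 θ1 θ2 t2) n 1 2
      rw [trajPt_apply1, trajPt_apply2, hθ2def, hz] at hp
      have e : θ1 t2 - (θ1 t2 + (2 * dd C K t2 - 2*π*(m:ℝ))) - 2*π*(z:ℝ)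
          = π * (((2*(m - z) - 1 : ℤ)):ℝ) := by
        rw [hdd2]; push_cast; ring
      rw [e] at hp
      have habs : (1:ℝ) ≤ |((2*(m - z) - 1 : ℤ):ℝ)| := by
        rw [← Int.cast_abs]
        exact_mod_cast Int.one_le_abs (by omega)
      rw [abs_mul, abs_of_pos Real.pi_pos] at hp
      nlinarith
    have hexp : Real.exp (-lam * t2) ≤ 1 := by
      apply Real.exp_le_one_iff.mpr
      rw [neg_mul]
      exact neg_nonpos_of_nonneg (mul_nonneg hlam.le ht2)
    have hexpp := Real.exp_pos (-lam * t2)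
    have hinf0nn := Metric.infDist_nonneg (x := trajPt θ0 θ1 θ2 0) (s := N)
    have hchain : k * Metric.infDist (trajPt θ0 θ1 θ2 0) N * Real.exp (-lam * t2) ≤ k * (2*ε) := by
      calc k * Metric.infDist (trajPt θ0 θ1 θ2 0) N * Real.exp (-lam * t2)
          ≤ k * (2*ε) * Real.exp (-lam * t2) := by
            apply mul_le_mul_of_nonneg_right _ hexpp.le
            exact mul_le_mul_of_nonneg_left hinf0 hk.le
        _ ≤ k * (2*ε) * 1 := by
            apply mul_le_mul_of_nonneg_left hexp (by positivity)
        _ = k * (2*ε) := by ring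
    have hhalf : k * (2*ε) ≤ 1/2 := by
      have h1 : k * ε ≤ k * (1/(4*k)) := mul_le_mul_of_nonneg_left hεk hk.le
      have h2 : k * (1/(4*k)) = 1/4 := by
        field_simp
      linarith
    linarith
  · -- Case B : in-manifold flow toward c, which is far from N
    push_neg at hcase
    obtain ⟨p, hpN⟩ := hNne
    obtain ⟨m, hm⟩ := hsub hpN
    set K := -(A * (Real.cos (c - α) + 2 * Real.cos (c + α))) with hKdef
    have hKneg : K < 0 := by rw [hKdef]; nlinarith
    set ξ := min (min (δ/2) (ε/(8*k))) 1 with hξdef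
    have hξpos : 0 < ξ := lt_min (lt_min (by linarith) (by positivity)) one_pos
    have hξδ : ξ ≤ δ/2 := le_trans (min_le_left _ _) (min_le_left _ _)
    have hξk : ξ ≤ ε/(8*k) := le_trans (min_le_left _ _) (min_le_right _ _)
    have hξ1 : ξ ≤ 1 := min_le_right _ _
    set r := p 0 - p 1 - c with hrdef
    set j := round (r / (2*π)) with hjdef
    set w := r - 2*π*(j:ℝ) with hwdef
    have hw : |w| ≤ π := by
      have h1 := abs_sub_round (r / (2*π))
      have h2 : w = (2*π) * (r/(2*π) - (j:ℝ)) := by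
        rw [hwdef]
        field_simp
      rw [h2, abs_mul, abs_of_pos (by linarith : (0:ℝ) < 2*π)]
      nlinarith
    have hπξ : 0 < π - ξ := by linarith
    set w2 := max (-(π - ξ)) (min (π - ξ) w) with hw2def
    have hw2a : |w2| ≤ π - ξ := by
      rw [abs_le]
      constructor
      · exact le_max_left _ _
      · exact max_le (by linarith) (min_le_left _ _)
    have hw2b : |w2 - w| ≤ ξ := by
      rcases le_total w (-(π - ξ)) with h | h
      · have hmin : min (π - ξ) w = w := min_eq_right (by linarith)
        have hmax : w2 = -(π - ξ) := by rw [hw2def, hmin]; exact max_eq_left h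
        rw [hmax, abs_le]
        have hwl : -π ≤ w := (abs_le.mp hw).1
        constructor <;> nlinarith [hwl]
      · rcases le_total (π - ξ) w with h2 | h2
        · have hmin : min (π - ξ) w = π - ξ := min_eq_left h2
          have hmax : w2 = π - ξ := by rw [hw2def, hmin]; exact max_eq_right (by linarith)
          rw [hmax, abs_le]
          constructor <;> nlinarith [(abs_le.mp hw).2]
        · have hmin : min (π - ξ) w = w := min_eq_right h2
          have hmax : w2 = w := by rw [hw2def, hmin]; exact max_eq_right h
          rw [hmax]
          simp [hξpos.le]
    set C := Real.tan (w2/2) with hCdef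
    have hw2half : -(π/2) < w2/2 ∧ w2/2 < π/2 := by
      have := abs_le.mp hw2a
      constructor <;> nlinarith [this.1, this.2]
    have hv0 : dd C K 0 = w2 := by
      rw [dd_zero, hCdef, Real.arctan_tan hw2half.1 hw2half.2]
      ring
    set θ1 := th1 A α ω (p 1) C K with hθ1def
    set θ0 := fun t => θ1 t + (c + dd C K t + 2*π*(j:ℝ)) with hθ0def
    set θ2 := fun t => θ1 t - 2*π*(m:ℝ) with hθ2def
    have hsol : IsSol A α ω 0 θ0 θ1 θ2 := isSol_long A α ω (p 1) C j m hI1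
    have h10 : θ1 0 = p 1 := th1_zero A α ω (p 1) C K
    have hθ00 : θ0 0 = p 1 + (c + w2 + 2*π*(j:ℝ)) := by
      simp only [hθ0def]
      rw [h10, hv0]
    have hθ20 : θ2 0 = p 1 - 2*π*(m:ℝ):= by
      simp only [hθ2def]
      rw [h10]
    have hd : dist (trajPt θ0 θ1 θ2 0) p ≤ ξ := by
      apply le_trans (dist_le_sum3 _ _)
      rw [trajPt_apply0, trajPt_apply1, trajPt_apply2, hθ00, hθ20, h10]
      have e0 : p 1 + (c + w2 + 2*π*(j:ℝ)) - p 0 = w2 - w := by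
        rw [hwdef, hrdef]; ring
      have e2 : p 1 - 2*π*(m:ℝ) - p 2 = 0 := by linear_combination hm
      rw [e0, e2]
      simp only [sub_self, abs_zero, abs_zero]
      simpa using hw2b
    have hinf0 : Metric.infDist (trajPt θ0 θ1 θ2 0) N ≤ ξ :=
      le_trans (Metric.infDist_le_dist_of_mem hpN) hd
    have hlt : Metric.infDist (trajPt θ0 θ1 θ2 0) N < δ := by linarith
    set ρ := ε/(4*(|C|+1)) with hρdef
    have hCabs : (0:ℝ) ≤ |C| := abs_nonneg C
    have hρpos : 0 < ρ := by rw [hρdef]; positivity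
    have hρ1 : ρ ≤ 1 := by
      rw [hρdef, div_le_one (by positivity)]
      nlinarith
    set t3 := Real.log ρ / K with ht3def
    have ht3 : 0 ≤ t3 :=
      div_nonneg_iff.mpr (Or.inr ⟨Real.log_nonpos hρpos.le hρ1, hKneg.le⟩)
    have hvt : |dd C K t3| ≤ ε/2 := by
      have he : Real.exp (K * t3) = ρ := by
        rw [ht3def, mul_div_cancel₀ _ hKneg.ne, Real.exp_log hρpos]
      rw [dd, he, abs_mul, abs_of_pos (by norm_num : (0:ℝ) < 2)]
      have h1 := abs_arctan_le (C * ρ)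
      rw [abs_mul, abs_of_pos hρpos] at h1
      have h2 : |C| * ρ ≤ (|C|+1) * ρ :=
        mul_le_mul_of_nonneg_right (by linarith) hρpos.le
      have hne : |C| + 1 ≠ 0 := by positivity
      have h3 : (|C|+1) * ρ = ε/4 := by
        rw [hρdef]
        field_simp
      linarith
    have hbnd := H θ0 θ1 θ2 hsol hlt t3 ht3
    have hlow : ε/4 ≤ Metric.infDist (trajPt θ0 θ1 θ2 t3) N := by
      apply le_infDist_of _ _ ⟨p, hpN⟩
      intro n hn
      have hn0 := hcase n hn j
      have hp := pair_le_dist (trajPt θ0 θ1 θ2 t3) n 0 1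
      rw [trajPt_apply0, trajPt_apply1, hθ0def] at hp
      have e : θ1 t3 + (c + dd C K t3 + 2*π*(j:ℝ)) - θ1 t3 - (n 0 - n 1)
          = dd C K t3 - (n 0 - n 1 - c - 2*π*(j:ℝ)) := by ring
      rw [e] at hp
      have habs : ε/2 ≤ |dd C K t3 - (n 0 - n 1 - c - 2*π*(j:ℝ))| := by
        have h1 := abs_sub_abs_le_abs_sub (n 0 - n 1 - c - 2*π*(j:ℝ)) (dd C K t3)
        have h2 : |(n 0 - n 1 - c - 2*π*(j:ℝ)) - dd C K t3|
            = |dd C K t3 - (n 0 - n 1 - c - 2*π*(j:ℝ))| := abs_sub_comm _ _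
        rw [h2] at h1
        linarith
      linarith
    have hexp : Real.exp (-lam * t3) ≤ 1 := by
      apply Real.exp_le_one_iff.mpr
      rw [neg_mul]
      exact neg_nonpos_of_nonneg (mul_nonneg hlam.le ht3)
    have hexpp := Real.exp_pos (-lam * t3)
    have hinf0nn := Metric.infDist_nonneg (x := trajPt θ0 θ1 θ2 0) (s := N)
    have hchain : k * Metric.infDist (trajPt θ0 θ1 θ2 0) N * Real.exp (-lam * t3) ≤ k * ξ := by
      calc k * Metric.infDist (trajPt θ0 θ1 θ2 0) N * Real.exp (-lam * t3)
          ≤ k * ξ * Real.exp (-lam * t3) := by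
            apply mul_le_mul_of_nonneg_right _ hexpp.le
            exact mul_le_mul_of_nonneg_left hinf0 hk.le
        _ ≤ k * ξ * 1 := by
            apply mul_le_mul_of_nonneg_left hexp (by positivity)
        _ = k * ξ := by ring
    have heighth : k * ξ ≤ ε/8 := by
      have h1 : k * ξ ≤ k * (ε/(8*k)) := mul_le_mul_of_nonneg_left hξk hk.le
      have h2 : k * (ε/(8*k)) = ε/8 := by
        field_simp
      linarith
    linarith

/-- For zero detuning and α > arctan √3: no nonempty positively invariant manifold
contained in M is exponentially stable; in particular both M₁ and M₁' fail to be
exponentially stable. -/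
theorem stmt_6 (A α ω : ℝ) (hA : 0 < A) (hω : 0 < ω) (hα : α ∈ Set.Ioo 0 (π / 2))
    (hαbig : Real.arctan (Real.sqrt 3) < α) :
    (∀ N : Set (EuclideanSpace ℝ (Fin 3)), N.Nonempty → N ⊆ Msync →
      PosInvariant A α ω 0 N → ¬ ExpStable A α ω 0 N) ∧
    ¬ ExpStable A α ω 0 (M1 α) ∧
    ¬ ExpStable A α ω 0 (M1' α) := by
  refine ⟨fun N hNne hsub _ => no_expStable A α ω hA hα hαbig N hNne hsub, ?_, ?_⟩
  · apply no_expStable A α ω hA hα hαbig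
    · exact ⟨WithLp.toLp 2 ![cAlpha α, 0, 0], ⟨0, by simp⟩, ⟨0, by norm_num⟩⟩
    · exact fun θ hθ => hθ.1
  · apply no_expStable A α ω hA hα hαbig
    · exact ⟨WithLp.toLp 2 ![π + cAlpha α, 0, 0], ⟨0, by simp⟩, ⟨0, by norm_num⟩⟩
    · exact fun θ hθ => hθ.1
end

section
/- Let θ = (θ₀, θ₁, θ₂) ∈ 𝕊³ and define z₁ = (1/2)(cos(θ₀ − θ₁) + cos(θ₀ − θ₂)) and z₂ = (1/2)(sin(θ₀ − θ₁) + sin(θ₀ − θ₂)). Then z₁² + z₂² = 1 if and only if θ₁ = θ₂ (as points on the circle, i.e., θ₁ − θ₂ is an integer multiple of 2π). Equivalently, θ belongs to the remote synchronization manifold M = {θ ∈ 𝕊³ : θ₁ = θ₂} if and only if (z₁, z₂) belongs to the unit circle L = {z ∈ ℝ² : z₁² + z₂² = 1}. -/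
open Real

/-- With z₁ = (1/2)(cos(θ₀−θ₁)+cos(θ₀−θ₂)) and z₂ = (1/2)(sin(θ₀−θ₁)+sin(θ₀−θ₂)),
the point (z₁, z₂) lies on the unit circle L = {z : z₁² + z₂² = 1} if and only if
θ₁ = θ₂ as points on the circle, i.e. θ₁ − θ₂ is an integer multiple of 2π
(equivalently, θ lies on the remote synchronization manifold M). -/
theorem stmt_9 (θ₀ θ₁ θ₂ : ℝ) :
    (((1/2) * (Real.cos (θ₀ - θ₁) + Real.cos (θ₀ - θ₂)),
      (1/2) * (Real.sin (θ₀ - θ₁) + Real.sin (θ₀ - θ₂)))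
        ∈ {z : ℝ × ℝ | z.1^2 + z.2^2 = 1})
    ↔ ∃ k : ℤ, θ₁ - θ₂ = 2 * π * (k : ℝ) := by
  simp only [Set.mem_setOf_eq]
  have key : ((1/2) * (Real.cos (θ₀ - θ₁) + Real.cos (θ₀ - θ₂)))^2
      + ((1/2) * (Real.sin (θ₀ - θ₁) + Real.sin (θ₀ - θ₂)))^2
      = (1 + Real.cos (θ₁ - θ₂)) / 2 := by
    have h1 := Real.sin_sq_add_cos_sq (θ₀ - θ₁)
    have h2 := Real.sin_sq_add_cos_sq (θ₀ - θ₂)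
    have h3 : Real.cos (θ₁ - θ₂) = Real.cos ((θ₀ - θ₂) - (θ₀ - θ₁)) := by congr 1; ring
    have h4 := Real.cos_sub (θ₀ - θ₂) (θ₀ - θ₁)
    rw [h3, h4]
    nlinarith [h1, h2]
  rw [key]
  constructor
  · intro h
    have hc : Real.cos (θ₁ - θ₂) = 1 := by linarith
    obtain ⟨n, hn⟩ := (Real.cos_eq_one_iff _).1 hc
    exact ⟨n, by linarith [hn]⟩
  · rintro ⟨k, hk⟩
    have : Real.cos (θ₁ - θ₂) = 1 := (Real.cos_eq_one_iff _).2 ⟨k, by linarith⟩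
    rw [this]; norm_num
end

section
/- Let α ∈ (0, π/2), A > 0, and c(α) = −arctan(sin α/(3 cos α)). Then for every x ∈ (−π, π + c(α)) with x ≠ c(α), one has (x − c(α))·(2 sin(x + α) + sin(x − α)) > 0. Consequently, V(x) = (1/2)(x − c(α))² is a strict Lyapunov function for the scalar dynamics ẋ = −2A sin(x + α) − A sin(x − α) on (−π, π + c(α)): its derivative along trajectories, −A(x − c(α))(2 sin(x + α) + sin(x − α)), is negative for all x in that interval except x = c(α), where it vanishes. -/
open Real

/-- For α ∈ (0, π/2), A > 0: for every x ∈ (−π, π + c(α)) with x ≠ c(α) one has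
(x − c(α))(2 sin(x+α) + sin(x−α)) > 0; consequently the derivative of
V(x) = (1/2)(x − c(α))² along ẋ = −2A sin(x+α) − A sin(x−α), namely
−A(x − c(α))(2 sin(x+α) + sin(x−α)), is negative there and vanishes at x = c(α). -/
theorem stmt_11 (A α : ℝ) (hA : 0 < A) (hα : α ∈ Set.Ioo 0 (π / 2)) :
    (∀ x ∈ Set.Ioo (-π) (π + cAlpha α), x ≠ cAlpha α →
      0 < (x - cAlpha α) * (2 * Real.sin (x + α) + Real.sin (x - α))) ∧
    (∀ x ∈ Set.Ioo (-π) (π + cAlpha α), x ≠ cAlpha α →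
      -A * (x - cAlpha α) * (2 * Real.sin (x + α) + Real.sin (x - α)) < 0) ∧
    -A * (cAlpha α - cAlpha α) *
        (2 * Real.sin (cAlpha α + α) + Real.sin (cAlpha α - α)) = 0 := by
  obtain ⟨hα0, hα2⟩ := hα
  have hpi := Real.pi_pos
  have hsinα : 0 < Real.sin α :=
    Real.sin_pos_of_pos_of_lt_pi hα0 (by linarith)
  have hcosα : 0 < Real.cos α :=
    Real.cos_pos_of_mem_Ioo ⟨by linarith, hα2⟩
  set t := Real.sin α / (3 * Real.cos α) with ht
  have ht0 : 0 < t := div_pos hsinα (by linarith)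
  have hca : cAlpha α = -Real.arctan t := rfl
  set a := Real.arctan t with hadef
  have hcosa : 0 < Real.cos a := Real.cos_arctan_pos t
  have hsina : Real.sin a = t * Real.cos a := by
    have h := Real.tan_arctan t
    rw [Real.tan_eq_sin_div_cos] at h
    field_simp at h
    linarith [h]
  have ha0 : 0 < a := by have := Real.arctan_strictMono ht0; rwa [Real.arctan_zero] at this
  have key : ∀ x ∈ Set.Ioo (-π) (π + cAlpha α), x ≠ cAlpha α →
      0 < (x - cAlpha α) * (2 * Real.sin (x + α) + Real.sin (x - α)) := by
    intro x hx hne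
    set y := x - cAlpha α with hy
    have hy1 : -π < y := by
      have := hx.1; rw [hy, hca]; linarith
    have hy2 : y < π := by
      have := hx.2; rw [hy, hca]; rw [hca] at this; linarith
    have hyne : y ≠ 0 := by
      rw [hy]; exact sub_ne_zero.mpr hne
    have hsiny : Real.sin y = Real.cos a * (Real.sin x + t * Real.cos x) := by
      rw [hy, hca, sub_neg_eq_add, Real.sin_add, hsina]; ring
    have hexpr : 2 * Real.sin (x + α) + Real.sin (x - α)
        = (3 * Real.cos α / Real.cos a) * Real.sin y := by
      rw [Real.sin_add, Real.sin_sub, hsiny, ht]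
      field_simp
      ring
    have hys : 0 < y * Real.sin y := by
      rcases hyne.lt_or_gt with h | h
      · have : Real.sin y < 0 := by
          have := Real.sin_pos_of_pos_of_lt_pi (x := -y) (by linarith) (by linarith)
          rw [Real.sin_neg] at this; linarith
        exact mul_pos_of_neg_of_neg h this
      · exact mul_pos h (Real.sin_pos_of_pos_of_lt_pi h hy2)
    have hk : 0 < 3 * Real.cos α / Real.cos a := div_pos (by linarith) hcosa
    rw [hexpr]
    calc (0:ℝ) < (3 * Real.cos α / Real.cos a) * (y * Real.sin y) := mul_pos hk hys
      _ = y * ((3 * Real.cos α / Real.cos a) * Real.sin y) := by ring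
  refine ⟨key, ?_, by simp⟩
  intro x hx hne
  have h := key x hx hne
  nlinarith
end

section
/- Let α ∈ (0, π/2), A > 0, c(α) = −arctan(sin α/(3 cos α)), and for x ∈ ℝ define the 2×2 matrix J(x) = −A·[[cos(x + α) + cos(x − α), cos(x + α)], [cos(x + α), cos(x + α) + cos(x − α)]] (the Jacobian of the reduced dynamics ẋᵢ = Σ_{j=1}^{2} A sin(−xⱼ − α) − A sin(xᵢ − α) evaluated at x₁ = x₂ = x). Then: (i) if α < arctan(√3), both eigenvalues of J(c(α)) are negative real numbers; (ii) for every α ∈ (0, π/2), the matrix J(π + c(α)) has a positive real eigenvalue; and (iii) if α > arctan(√3), the matrix J(c(α)) has a positive real eigenvalue. -/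
open Real

/-- The Jacobian J(x) of the reduced dynamics evaluated at x₁ = x₂ = x. -/
noncomputable def Jmat (A α x : ℝ) : Matrix (Fin 2) (Fin 2) ℝ :=
  (-A) • !![Real.cos (x + α) + Real.cos (x - α), Real.cos (x + α);
            Real.cos (x + α), Real.cos (x + α) + Real.cos (x - α)]

lemma eig_iff (s a b μ : ℝ) :
    Module.End.HasEigenvalue (Matrix.toLin' (s • !![a+b, a; a, a+b])) μ ↔
      μ = s*(2*a+b) ∨ μ = s*b := by
  constructor
  · intro h
    obtain ⟨v, hmem, hv0⟩ := h.exists_hasEigenvector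
    rw [Module.End.mem_eigenspace_iff, Matrix.toLin'_apply] at hmem
    have h0 := congrFun hmem 0
    have h1 := congrFun hmem 1
    simp [Matrix.mulVec, dotProduct, Fin.sum_univ_two] at h0 h1
    have key1 : (s*(2*a+b) - μ) * (v 0 + v 1) = 0 := by ring_nf; nlinarith [h0, h1]
    have key2 : (s*b - μ) * (v 0 - v 1) = 0 := by ring_nf; nlinarith [h0, h1]
    rcases mul_eq_zero.1 key1 with h | hsum
    · left; linarith
    rcases mul_eq_zero.1 key2 with h | hdiff
    · right; linarith
    exfalso; apply hv0
    have e0 : v 0 = 0 := by linarith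
    have e1 : v 1 = 0 := by linarith
    funext i; fin_cases i <;> simp [e0, e1]
  · rintro (rfl | rfl)
    · apply Module.End.hasEigenvalue_of_hasEigenvector (x := ![1,1])
      constructor
      · rw [Module.End.mem_eigenspace_iff, Matrix.toLin'_apply]
        funext i; fin_cases i <;>
          simp [Matrix.mulVec, dotProduct, Fin.sum_univ_two] <;> ring
      · intro h; have := congrFun h 0; simp at this
    · apply Module.End.hasEigenvalue_of_hasEigenvector (x := ![1,-1])
      constructor
      · rw [Module.End.mem_eigenspace_iff, Matrix.toLin'_apply]
        funext i; fin_cases i <;>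
          simp [Matrix.mulVec, dotProduct, Fin.sum_univ_two] <;> ring
      · intro h; have := congrFun h 0; simp at this

/-- (i) If α < arctan √3, both eigenvalues of J(c(α)) are negative;
(ii) for every α ∈ (0, π/2), J(π + c(α)) has a positive eigenvalue;
(iii) if α > arctan √3, J(c(α)) has a positive eigenvalue. -/
theorem stmt_12 (A α : ℝ) (hA : 0 < A) (hα : α ∈ Set.Ioo 0 (π / 2)) :
    (α < Real.arctan (Real.sqrt 3) →
      (∃ μ : ℝ, Module.End.HasEigenvalue (Matrix.toLin' (Jmat A α (cAlpha α))) μ) ∧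
      ∀ μ : ℝ, Module.End.HasEigenvalue (Matrix.toLin' (Jmat A α (cAlpha α))) μ → μ < 0) ∧
    (∃ μ : ℝ, 0 < μ ∧
      Module.End.HasEigenvalue (Matrix.toLin' (Jmat A α (π + cAlpha α))) μ) ∧
    (Real.arctan (Real.sqrt 3) < α →
      ∃ μ : ℝ, 0 < μ ∧
        Module.End.HasEigenvalue (Matrix.toLin' (Jmat A α (cAlpha α))) μ) := by
  obtain ⟨hα0, hα2⟩ := hα
  have hpi := Real.pi_pos
  have hcos : 0 < Real.cos α := Real.cos_pos_of_mem_Ioo ⟨by linarith, hα2⟩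
  have hsin : 0 < Real.sin α := Real.sin_pos_of_pos_of_lt_pi hα0 (by linarith)
  set t : ℝ := Real.sin α / (3 * Real.cos α) with ht
  have htpos : 0 < t := div_pos hsin (by linarith)
  set S : ℝ := Real.sqrt (1 + t ^ 2) with hSdef
  have hS : 0 < S := Real.sqrt_pos.2 (by positivity)
  have hJ : ∀ x μ : ℝ, Module.End.HasEigenvalue (Matrix.toLin' (Jmat A α x)) μ ↔
      μ = (-A) * (2 * Real.cos (x + α) + Real.cos (x - α)) ∨
      μ = (-A) * Real.cos (x - α) := by
    intro x μ; unfold Jmat; exact eig_iff _ _ _ _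
  have hp : Real.cos (cAlpha α + α) = (Real.cos α + t * Real.sin α) / S := by
    rw [show cAlpha α + α = α - Real.arctan t by unfold cAlpha; rw [← ht]; ring,
      Real.cos_sub, Real.cos_arctan, Real.sin_arctan, ← hSdef]
    ring
  have hq : Real.cos (cAlpha α - α) = (Real.cos α - t * Real.sin α) / S := by
    rw [show cAlpha α - α = -(α + Real.arctan t) by unfold cAlpha; rw [← ht]; ring,
      Real.cos_neg, Real.cos_add, Real.cos_arctan, Real.sin_arctan, ← hSdef]
    ring
  have key : 0 < 2 * Real.cos (cAlpha α + α) + Real.cos (cAlpha α - α) := by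
    rw [hp, hq, show 2 * ((Real.cos α + t * Real.sin α) / S) +
        (Real.cos α - t * Real.sin α) / S = (3 * Real.cos α + t * Real.sin α) / S by ring]
    exact div_pos (by nlinarith) hS
  have hs3 : Real.sqrt 3 ^ 2 = 3 := Real.sq_sqrt (by norm_num)
  have hs3pos : 0 < Real.sqrt 3 := by positivity
  have hqform : Real.cos α - t * Real.sin α =
      (3 * Real.cos α ^ 2 - Real.sin α ^ 2) / (3 * Real.cos α) := by
    rw [ht]; field_simp
  refine ⟨?_, ?_, ?_⟩
  · intro h
    have htan : Real.tan α < Real.sqrt 3 := by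
      have h1 : Real.tan α < Real.tan (Real.arctan (Real.sqrt 3)) :=
        Real.tan_lt_tan_of_lt_of_lt_pi_div_two (by linarith)
          (Real.arctan_lt_pi_div_two _) h
      rwa [Real.tan_arctan] at h1
    have hsq : Real.sin α ^ 2 < 3 * Real.cos α ^ 2 := by
      rw [Real.tan_eq_sin_div_cos] at htan
      have h2 : Real.sin α < Real.sqrt 3 * Real.cos α := (div_lt_iff₀ hcos).1 htan
      nlinarith
    have hqpos : 0 < Real.cos (cAlpha α - α) := by
      rw [hq, hqform]
      exact div_pos (div_pos (by linarith) (by linarith)) hS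
    constructor
    · exact ⟨(-A) * Real.cos (cAlpha α - α), (hJ _ _).2 (Or.inr rfl)⟩
    · intro μ hμ
      rcases (hJ _ _).1 hμ with rfl | rfl
      · nlinarith
      · nlinarith
  · have e1 : Real.cos ((π + cAlpha α) + α) = -Real.cos (cAlpha α + α) := by
      rw [show (π + cAlpha α) + α = π + (cAlpha α + α) by ring]
      simp [Real.cos_add]
    have e2 : Real.cos ((π + cAlpha α) - α) = -Real.cos (cAlpha α - α) := by
      rw [show (π + cAlpha α) - α = π + (cAlpha α - α) by ring]
      simp [Real.cos_add]
    refine ⟨A * (2 * Real.cos (cAlpha α + α) + Real.cos (cAlpha α - α)),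
      by nlinarith, (hJ _ _).2 (Or.inl ?_)⟩
    rw [e1, e2]; ring
  · intro h
    have htan : Real.sqrt 3 < Real.tan α := by
      have h1 : Real.tan (Real.arctan (Real.sqrt 3)) < Real.tan α :=
        Real.tan_lt_tan_of_lt_of_lt_pi_div_two
          (by linarith [Real.neg_pi_div_two_lt_arctan (Real.sqrt 3)]) hα2 h
      rwa [Real.tan_arctan] at h1
    have hsq : 3 * Real.cos α ^ 2 < Real.sin α ^ 2 := by
      rw [Real.tan_eq_sin_div_cos] at htan
      have h2 : Real.sqrt 3 * Real.cos α < Real.sin α := (lt_div_iff₀ hcos).1 htan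
      nlinarith [mul_pos (sub_pos.2 h2)
        (show (0:ℝ) < Real.sin α + Real.sqrt 3 * Real.cos α by positivity)]
    have hqneg : Real.cos (cAlpha α - α) < 0 := by
      rw [hq, hqform]
      exact div_neg_of_neg_of_pos (div_neg_of_neg_of_pos (by linarith) (by linarith)) hS
    exact ⟨(-A) * Real.cos (cAlpha α - α), by nlinarith, (hJ _ _).2 (Or.inr rfl)⟩
end

section
/- Let θ(t) = (θ₀(t), θ₁(t), θ₂(t)) be a solution of the Kuramoto–Sakaguchi star network θ̇ᵢ = ω + A sin(θ₀ − θᵢ − α) for i = 1,2 and θ̇₀ = ω + Σ_{j=1}^2 A sin(θⱼ − θ₀ − α) + u, with A > 0, α ∈ (0, π/2), and suppose θ₁(t) = θ₂(t) (the solution lies on the remote synchronization manifold). Then the frequencies v₁ = θ̇₁ + θ̇₂ and v₂ = θ̇₀ satisfy the ellipse identity (v₁ + v₂ − 3ω − u)²/(16A² sin²α) + (v₁ − v₂ − ω + u)²/(16A² cos²α) = 1 at every time t. -/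
open Real

/-- Along a remotely synchronized solution (θ₁ ≡ θ₂) of the Kuramoto–Sakaguchi star
network with detuning u, the frequencies v₁ = θ̇₁ + θ̇₂ and v₂ = θ̇₀ satisfy the
ellipse identity
(v₁+v₂−3ω−u)²/(16A² sin²α) + (v₁−v₂−ω+u)²/(16A² cos²α) = 1 at every time. -/
theorem stmt_17 (A α u ω : ℝ) (hA : 0 < A) (hα : α ∈ Set.Ioo 0 (π / 2)) (hω : 0 < ω)
    (θ0 θ1 θ2 : ℝ → ℝ)
    (h1 : ∀ t : ℝ, HasDerivAt θ1 (ω + A * Real.sin (θ0 t - θ1 t - α)) t)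
    (h2 : ∀ t : ℝ, HasDerivAt θ2 (ω + A * Real.sin (θ0 t - θ2 t - α)) t)
    (h0 : ∀ t : ℝ, HasDerivAt θ0
      (ω + (A * Real.sin (θ1 t - θ0 t - α) + A * Real.sin (θ2 t - θ0 t - α)) + u) t)
    (hsync : ∀ t : ℝ, θ1 t = θ2 t) :
    ∀ t : ℝ,
      ((deriv θ1 t + deriv θ2 t) + deriv θ0 t - 3 * ω - u)^2
          / (16 * A^2 * Real.sin α ^ 2)
        + ((deriv θ1 t + deriv θ2 t) - deriv θ0 t - ω + u)^2
          / (16 * A^2 * Real.cos α ^ 2) = 1 := by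
  intro t
  have hsα : Real.sin α ≠ 0 := ne_of_gt (Real.sin_pos_of_pos_of_lt_pi hα.1 (by
    have := hα.2; nlinarith [Real.pi_pos]))
  have hcα : Real.cos α ≠ 0 := ne_of_gt (Real.cos_pos_of_mem_Ioo
    ⟨by linarith [hα.1, Real.pi_pos], hα.2⟩)
  have hA' : A ≠ 0 := ne_of_gt hA
  rw [(h1 t).deriv, (h2 t).deriv, (h0 t).deriv]
  rw [← hsync t]
  have key := Real.sin_sq_add_cos_sq (θ0 t - θ1 t)
  rw [show θ0 t - θ1 t - α = (θ0 t - θ1 t) - α by ring,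
      show θ1 t - θ0 t - α = -((θ0 t - θ1 t) + α) by ring,
      Real.sin_neg, Real.sin_sub, Real.sin_add]
  field_simp
  linear_combination (16 * A ^ 2 * Real.sin α ^ 2 * Real.cos α ^ 2) * key
end
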